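/- Let d ≥ 1 be a natural number, r > 0, and S a finite set of points in Fin d → ℝ with (S.card : ℝ) · (2r)^d < 1. Then there exists a function f : (Fin d → ℝ) → ℝ such that f is 1-Lipschitz with respect to the sup metric, f(s) = 0 for every s ∈ S, f is nonnegative, and there exists y in the unit cube Set.Icc (0 : Fin d → ℝ) 1 with f(y) ≥ r. -/
import Mathlib

open MeasureTheory Metric

lemma volume_closedBall_sup (d : ℕ) (s : Fin d → ℝ) {r : ℝ} (hr : 0 ≤ r) :
    volume (Metric.closedBall s r) = ENNReal.ofReal (2 * r) ^ d := by
  rw [closedBall_pi s hr]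
  simp only [Real.closedBall_eq_Icc, Set.pi_univ_Icc, Real.volume_Icc_pi]
  have h : ∀ i : Fin d, s i + r - (s i - r) = 2 * r := fun i => by ring
  simp [h, Finset.prod_const]

/-- Indistinguishability lemma: with fewer than `(2r)^(−d)` samples, there is a
nonnegative 1-Lipschitz function (sup metric) vanishing on all samples yet
reaching value at least `r` somewhere on the unit cube. -/
theorem exists_lipschitz_bump_vanishing_on_samples
    (d : ℕ) (hd : 1 ≤ d) (r : ℝ) (hr : 0 < r)
    (S : Finset (Fin d → ℝ))
    (hcard : (S.card : ℝ) * (2 * r) ^ d < 1) :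
    ∃ f : (Fin d → ℝ) → ℝ,
      LipschitzWith 1 f ∧ (∀ s ∈ S, f s = 0) ∧ (∀ x, 0 ≤ f x) ∧
      ∃ y ∈ Set.Icc (0 : Fin d → ℝ) 1, r ≤ f y := by
  -- volume of union of balls < volume of cube
  have h2r : (0:ℝ) ≤ 2 * r := by positivity
  have hvolU : volume (⋃ s ∈ S, Metric.closedBall s r)
      ≤ ENNReal.ofReal ((S.card : ℝ) * (2 * r) ^ d) := by
    calc volume (⋃ s ∈ S, Metric.closedBall s r)
        ≤ ∑ s ∈ S, volume (Metric.closedBall s r) :=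
          measure_biUnion_finset_le S _
      _ = ∑ s ∈ S, ENNReal.ofReal ((2 * r) ^ d) := by
          refine Finset.sum_congr rfl fun s _ => ?_
          rw [volume_closedBall_sup d _ hr.le, ← ENNReal.ofReal_pow h2r]
      _ = S.card * ENNReal.ofReal ((2 * r) ^ d) := by
          rw [Finset.sum_const, nsmul_eq_mul]
      _ = ENNReal.ofReal ((S.card : ℝ) * (2 * r) ^ d) := by
          rw [← ENNReal.ofReal_natCast, ← ENNReal.ofReal_mul (by positivity)]
  have hcube : volume (Set.Icc (0 : Fin d → ℝ) 1) = 1 := by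
    rw [Real.volume_Icc_pi]; simp
  have hne : ¬ Set.Icc (0 : Fin d → ℝ) 1 ⊆ ⋃ s ∈ S, Metric.closedBall s r := by
    intro hsub
    have := (measure_mono hsub).trans hvolU
    rw [hcube] at this
    have : (1:ℝ) ≤ (S.card : ℝ) * (2 * r) ^ d := by
      have := ENNReal.one_le_ofReal.mp this
      linarith [this]
    linarith
  obtain ⟨y, hy, hyU⟩ := Set.not_subset.mp hne
  refine ⟨fun x => max 0 (r - dist x y), ?_, ?_, fun x => le_max_left _ _, y, hy, ?_⟩
  · have h1 : LipschitzWith 1 (fun x : Fin d → ℝ => r - dist x y) := by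
      apply LipschitzWith.of_dist_le_mul
      intro x z
      simp only [Real.dist_eq, NNReal.coe_one, one_mul]
      have : r - dist x y - (r - dist z y) = dist z y - dist x y := by ring
      rw [this]
      calc |dist z y - dist x y| ≤ dist z x := abs_dist_sub_le z x y
        _ = dist x z := dist_comm z x
    exact h1.const_max 0
  · intro s hs
    have : ¬ y ∈ Metric.closedBall s r := fun h => hyU (Set.mem_biUnion hs h)
    rw [Metric.mem_closedBall, not_le, dist_comm] at this
    simp [max_eq_left, sub_nonpos.mpr this.le]
  · simp
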